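/- arXiv:2304.14895 — 2 statements merged into one kernel-verified Lean document; each statement's English description precedes it below -/
import Mathlib

section
/- Let Z, U be real random variables, ε_A a random variable independent of (Z,U), γ, λ constants, and A = γZ + λU + ε_A. Then E(Z | ε_A, A) = E(Z | γZ + λU) almost surely; i.e., the conditional expectation of Z given the σ-algebra generated by (ε_A, A) equals the conditional expectation of Z given γZ + λU. -/
open MeasureTheory ProbabilityTheory

lemma aux_condexp_drop {Ω : Type*} [m0 : MeasurableSpace Ω] (μ : Measure Ω)
    [IsProbabilityMeasure μ]
    {m1 m2 mW : MeasurableSpace Ω} (hm1 : m1 ≤ m0) (hm2 : m2 ≤ m0) (hmW1 : mW ≤ m1)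
    {Z : Ω → ℝ} (hZm : Measurable[m1] Z) (hZint : Integrable Z μ)
    (hindep : Indep m2 m1 μ) :
    μ[Z | m2 ⊔ mW] =ᵐ[μ] μ[Z | mW] := by
  letI : MeasurableSpace Ω := m0
  have hmW0 : mW ≤ m0 := hmW1.trans hm1
  have hsup : m2 ⊔ mW ≤ m0 := sup_le hm2 hmW0
  set g := μ[Z | mW] with hg
  have hgmW : AEStronglyMeasurable[mW] g μ := stronglyMeasurable_condExp.aestronglyMeasurable
  set g' := hgmW.mk g with hg'
  have hg'm : StronglyMeasurable[mW] g' := hgmW.stronglyMeasurable_mk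
  have hgg' : g =ᵐ[μ] g' := hgmW.ae_eq_mk
  have hgint : Integrable g μ := integrable_condExp
  have hg'int : Integrable g' μ := hgint.congr hgg'
  -- the generating π-system
  set C : Set (Set Ω) := {s | ∃ t u, MeasurableSet[m2] t ∧ MeasurableSet[mW] u ∧ s = t ∩ u}
    with hC
  have hgen : (m2 ⊔ mW) = MeasurableSpace.generateFrom C := by
    refine le_antisymm (sup_le ?_ ?_) (MeasurableSpace.generateFrom_le ?_)
    · intro t ht
      exact MeasurableSpace.measurableSet_generateFrom
        ⟨t, Set.univ, ht, MeasurableSet.univ, by simp⟩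
    · intro u hu
      exact MeasurableSpace.measurableSet_generateFrom
        ⟨Set.univ, u, MeasurableSet.univ, hu, by simp⟩
    · rintro s ⟨t, u, ht, hu, rfl⟩
      exact ((le_sup_left : m2 ≤ m2 ⊔ mW) _ ht).inter ((le_sup_right : mW ≤ m2 ⊔ mW) _ hu)
  have hpi : IsPiSystem C := by
    rintro s ⟨t, u, ht, hu, rfl⟩ s' ⟨t', u', ht', hu', rfl⟩ -
    exact ⟨t ∩ t', u ∩ u', ht.inter ht', hu.inter hu', Set.inter_inter_inter_comm t u t' u'⟩
  -- product formula on rectangles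
  have mulkey : ∀ (t u : Set Ω), MeasurableSet[m2] t → MeasurableSet[mW] u →
      ∀ (h : Ω → ℝ), Measurable[m1] h → Integrable h μ →
      ∫ x in t ∩ u, h x ∂μ = (μ t).toReal * ∫ x in u, h x ∂μ := by
    intro t u ht hu h hhm hhint
    set X : Ω → ℝ := t.indicator fun _ => (1 : ℝ) with hX
    have hXm : Measurable[m2] X := measurable_const.indicator ht
    have hYm : Measurable[m1] (u.indicator h) := hhm.indicator (hmW1 _ hu)
    have hXY : IndepFun X (u.indicator h) μ :=
      indep_of_indep_of_le_right
        (indep_of_indep_of_le_left hindep (measurable_iff_comap_le.1 hXm))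
        (measurable_iff_comap_le.1 hYm)
    have hXsm : AEStronglyMeasurable X μ := ((hXm.mono hm2 le_rfl)).aestronglyMeasurable
    have hYsm : AEStronglyMeasurable (u.indicator h) μ :=
      ((hYm.mono hm1 le_rfl)).aestronglyMeasurable
    calc ∫ x in t ∩ u, h x ∂μ
        = ∫ x, (t ∩ u).indicator h x ∂μ :=
          (integral_indicator ((hm2 _ ht).inter (hmW0 _ hu))).symm
      _ = ∫ x, X x * u.indicator h x ∂μ := by
          refine integral_congr_ae (Filter.Eventually.of_forall fun x => ?_)
          by_cases hx : x ∈ t <;> by_cases hx' : x ∈ u <;>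
            simp [hX, Set.indicator, hx, hx', Set.mem_inter_iff]
      _ = (∫ x, X x ∂μ) * ∫ x, u.indicator h x ∂μ := hXY.integral_mul_eq_mul_integral hXsm hYsm
      _ = (μ t).toReal * ∫ x in u, h x ∂μ := by
          rw [hX, integral_indicator (hm2 _ ht), integral_indicator (hmW0 _ hu)]
          rw [setIntegral_const]
          simp [Measure.real]
  -- set-integral equality on all of m2 ⊔ mW
  have key : ∀ s, MeasurableSet[m2 ⊔ mW] s → ∫ x in s, g x ∂μ = ∫ x in s, Z x ∂μ := by
    intro s hs
    refine MeasurableSpace.induction_on_inter (m := m2 ⊔ mW)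
      (C := fun s _ => ∫ x in s, g x ∂μ = ∫ x in s, Z x ∂μ) hgen hpi (by simp) ?_ ?_ ?_ s hs
    · rintro s ⟨t, u, ht, hu, rfl⟩
      have h1 : ∫ x in t ∩ u, g x ∂μ = ∫ x in t ∩ u, g' x ∂μ :=
        integral_congr_ae (ae_restrict_of_ae hgg')
      have h2 : ∫ x in u, g' x ∂μ = ∫ x in u, g x ∂μ :=
        integral_congr_ae (ae_restrict_of_ae hgg'.symm)
      have h3 : ∫ x in u, g x ∂μ = ∫ x in u, Z x ∂μ := setIntegral_condExp hmW0 hZint hu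
      have hg'm1 : Measurable[m1] g' := (hg'm.measurable).mono hmW1 le_rfl
      rw [h1, mulkey t u ht hu g' hg'm1 hg'int, h2, h3,
        mulkey t u ht hu Z hZm hZint]
    · intro s hsm hseq
      have hs0 : MeasurableSet s := hsup _ hsm
      have e1 : ∫ x in s, g x ∂μ + ∫ x in sᶜ, g x ∂μ = ∫ x, g x ∂μ :=
        integral_add_compl hs0 hgint
      have e2 : ∫ x in s, Z x ∂μ + ∫ x in sᶜ, Z x ∂μ = ∫ x, Z x ∂μ :=
        integral_add_compl hs0 hZint
      have e3 : ∫ x, g x ∂μ = ∫ x, Z x ∂μ := integral_condExp hmW0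
      linarith
    · intro f hdisj hfm hfeq
      rw [integral_iUnion (fun i => hsup _ (hfm i)) hdisj hgint.integrableOn,
        integral_iUnion (fun i => hsup _ (hfm i)) hdisj hZint.integrableOn]
      exact tsum_congr hfeq
  exact (ae_eq_condExp_of_forall_setIntegral_eq hsup hZint
    (fun s _ _ => hgint.integrableOn) (fun s hs _ => key s hs) (hgmW.mono le_sup_right)).symm

/-- With ε_A independent of (Z,U) and A = γZ + λU + ε_A,
E(Z | ε_A, A) = E(Z | γZ + λU) almost surely. -/
theorem stmt4 {Ω : Type*} [MeasurableSpace Ω] (μ : Measure Ω) [IsProbabilityMeasure μ]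
    (Z U εA : Ω → ℝ) (hmZ : Measurable Z) (hmU : Measurable U) (hmε : Measurable εA)
    (hZint : Integrable Z μ) (hUint : Integrable U μ) (hεint : Integrable εA μ)
    (hindep : IndepFun εA (fun ω => (Z ω, U ω)) μ)
    (γ lam : ℝ) (A : Ω → ℝ) (hA : ∀ ω, A ω = γ * Z ω + lam * U ω + εA ω) :
    μ[Z | MeasurableSpace.comap (fun ω => (εA ω, A ω)) inferInstance]
      =ᵐ[μ] μ[Z | MeasurableSpace.comap (fun ω => γ * Z ω + lam * U ω) inferInstance] := by
  rename_i mΩ hprob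
  set W : Ω → ℝ := fun ω => γ * Z ω + lam * U ω with hW
  set P : Ω → ℝ × ℝ := fun ω => (Z ω, U ω) with hP
  set m1 : MeasurableSpace Ω := MeasurableSpace.comap P inferInstance with hm1def
  set m2 : MeasurableSpace Ω := MeasurableSpace.comap εA inferInstance with hm2def
  set mW : MeasurableSpace Ω := MeasurableSpace.comap W inferInstance with hmWdef
  have hm1 : m1 ≤ mΩ := (hmZ.prodMk hmU).comap_le
  have hm2 : m2 ≤ mΩ := hmε.comap_le
  have hPm1 : Measurable[m1] P := measurable_iff_comap_le.2 le_rfl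
  have hZm1 : Measurable[m1] Z := measurable_fst.comp hPm1
  have hUm1 : Measurable[m1] U := measurable_snd.comp hPm1
  have hWm1 : Measurable[m1] W := ((measurable_const.mul hZm1).add (measurable_const.mul hUm1))
  have hmW1 : mW ≤ m1 := measurable_iff_comap_le.1 hWm1
  have hεm2 : Measurable[m2] εA := measurable_iff_comap_le.2 le_rfl
  letI : MeasurableSpace Ω := mΩ
  have hWmW : Measurable[mW] W := measurable_iff_comap_le.2 le_rfl
  -- the σ-algebra of the pair equals m2 ⊔ mW
  have hpair : MeasurableSpace.comap (fun ω => (εA ω, A ω)) inferInstance = m2 ⊔ mW := by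
    refine le_antisymm ?_ (sup_le ?_ ?_)
    · refine measurable_iff_comap_le.1 (Measurable.prodMk ?_ ?_)
      · exact hεm2.mono le_sup_left le_rfl
      · have : Measurable[m2 ⊔ mW] fun ω => W ω + εA ω :=
          (hWmW.mono le_sup_right le_rfl).add (hεm2.mono le_sup_left le_rfl)
        have hAeq : A = fun ω => W ω + εA ω := funext fun ω => by
          rw [hA ω]
        rw [hAeq]; exact this
    · have hQ : Measurable[MeasurableSpace.comap (fun ω => (εA ω, A ω)) inferInstance]
          (fun ω => (εA ω, A ω)) := measurable_iff_comap_le.2 le_rfl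
      exact measurable_iff_comap_le.1 (measurable_fst.comp hQ)
    · have hQ : Measurable[MeasurableSpace.comap (fun ω => (εA ω, A ω)) inferInstance]
          (fun ω => (εA ω, A ω)) := measurable_iff_comap_le.2 le_rfl
      have hWQ : Measurable[MeasurableSpace.comap (fun ω => (εA ω, A ω)) inferInstance] W := by
        have : Measurable[MeasurableSpace.comap (fun ω => (εA ω, A ω)) inferInstance]
            (fun ω => A ω - εA ω) := (measurable_snd.comp hQ).sub (measurable_fst.comp hQ)
        have hWeq : W = fun ω => A ω - εA ω := funext fun ω => by
          rw [hA ω]; ring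
        rw [hWeq]; exact this
      exact measurable_iff_comap_le.1 hWQ
  have hindep' : Indep m2 m1 μ := hindep
  rw [hpair]
  exact aux_condexp_drop μ hm1 hm2 hmW1 hZm1 hZint hindep'
end

section
/- Let Z ~ N(0,1), U ~ N(0,1), and ε_A ~ Uniform(-1,1) be independent, and A = Z + U + ε_A. Then E[ZA]/E[A²] = 3/7 and E[ZA³]/E[A⁴] = 35/81; since these ratios differ, there is no constant k with E[(Z - kA)·f(A)] = 0 for all polynomials f, hence E(Z|A) is not a.s. linear in A. -/
open MeasureTheory ProbabilityTheory

open Real Set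
open scoped NNReal ENNReal

lemma pdf01 (x : ℝ) : gaussianPDFReal 0 1 x = (√(2*π))⁻¹ * rexp (-(2⁻¹) * x^2) := by
  simp [gaussianPDFReal, NNReal.coe_one]
  ring_nf
  tauto

lemma castlt (n : ℕ) : (-1:ℝ) < n := lt_of_lt_of_le neg_one_lt_zero (Nat.cast_nonneg n)

lemma integrable_pow_gauss (n : ℕ) :
    Integrable (fun x : ℝ => x ^ n * rexp (-(2⁻¹:ℝ) * x ^ 2)) := by
  have := integrable_rpow_mul_exp_neg_mul_sq (b := 2⁻¹) (by norm_num) (s := n) (castlt n)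
  simpa [Real.rpow_natCast] using this

lemma gauss_odd (n : ℕ) (hn : Odd n) :
    ∫ x : ℝ, x ^ n * rexp (-(2⁻¹:ℝ) * x ^ 2) = 0 := by
  set g := fun x : ℝ => x ^ n * rexp (-(2⁻¹:ℝ) * x ^ 2) with hg
  have h : ∫ x : ℝ, g x = ∫ x : ℝ, g (-x) := by
    conv_lhs => rw [← Measure.map_neg_eq_self (volume : Measure ℝ)]
    exact MeasureTheory.integral_map_equiv (MeasurableEquiv.neg ℝ) g
  have h2 : ∀ x : ℝ, g (-x) = - g x := by
    intro x
    simp only [hg, hn.neg_pow, neg_sq, neg_mul]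
  rw [funext h2] at h
  simp only [integral_neg] at h
  linarith

lemma gauss_even_aux (n : ℕ) :
    ∫ x : ℝ, x ^ (2*n) * rexp (-(2⁻¹:ℝ) * x ^ 2)
      = 2 * ((2:ℝ)⁻¹ ^ (-((2*n:ℝ) + 1) / 2) * (1 / 2) * Gamma (((2*n:ℝ) + 1) / 2)) := by
  have h1 : ∫ x : ℝ, x ^ (2*n) * rexp (-(2⁻¹:ℝ) * x ^ 2)
      = ∫ x : ℝ, |x| ^ (2*n) * rexp (-(2⁻¹:ℝ) * |x| ^ 2) := by
    congr 1; funext x; rw [pow_mul, pow_mul, sq_abs]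
  rw [h1, integral_comp_abs (f := fun x => x ^ (2*n) * rexp (-(2⁻¹:ℝ) * x ^ 2))]
  have h2 : ∫ x in Ioi (0:ℝ), x ^ (2*n) * rexp (-(2⁻¹:ℝ) * x ^ 2)
      = ∫ x in Ioi (0:ℝ), x ^ ((2*n : ℕ):ℝ) * rexp (-(2⁻¹:ℝ) * x ^ (2:ℝ)) := by
    refine setIntegral_congr_fun measurableSet_Ioi (fun x hx => ?_)
    rw [Real.rpow_natCast, Real.rpow_two]
  rw [h2, integral_rpow_mul_exp_neg_mul_rpow (by norm_num) (castlt _) (by norm_num)]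
  push_cast
  ring_nf

lemma sqrt2pi : √(2*π) = √2 * √π := Real.sqrt_mul (by norm_num) _

lemma rpow_half : (2:ℝ) ^ ((1:ℝ)/2) = √2 := (Real.sqrt_eq_rpow 2).symm

lemma gauss2 : ∫ x : ℝ, x ^ 2 * rexp (-(2⁻¹:ℝ) * x ^ 2) = √2 * √π := by
  have h := gauss_even_aux 1
  norm_num at h
  have e0 : ∀ x:ℝ, x^2 * rexp (-(2⁻¹:ℝ)*x^2) = x^2*rexp (-(1/2*x^2)) := fun x => by norm_num
  simp only [e0]
  rw [h]
  have e1 : ((1/2:ℝ)) ^ (-(3/2) : ℝ) = 2 * √2 := by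
    rw [show (1/2:ℝ) = 2⁻¹ by norm_num]
    rw [Real.inv_rpow (by norm_num), ← Real.rpow_neg (by norm_num)]
    norm_num
    rw [show (3/2 : ℝ) = 1 + 1/2 by norm_num, Real.rpow_add (by norm_num), Real.rpow_one, rpow_half]
  have e2 : Real.Gamma (3/2 : ℝ) = (1/2) * √π := by
    rw [show (3/2:ℝ) = 1/2 + 1 by norm_num, Real.Gamma_add_one (by norm_num), Real.Gamma_one_half_eq]
  rw [e1, e2]; ring

lemma gauss4 : ∫ x : ℝ, x ^ 4 * rexp (-(2⁻¹:ℝ) * x ^ 2) = 3 * (√2 * √π) := by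
  have h := gauss_even_aux 2
  norm_num at h
  have e0 : ∀ x:ℝ, x^4 * rexp (-(2⁻¹:ℝ)*x^2) = x^4*rexp (-(1/2*x^2)) := fun x => by norm_num
  simp only [e0]
  rw [h]
  have e1 : ((1/2:ℝ)) ^ (-(5/2) : ℝ) = 4 * √2 := by
    rw [show (1/2:ℝ) = 2⁻¹ by norm_num]
    rw [Real.inv_rpow (by norm_num), ← Real.rpow_neg (by norm_num)]
    norm_num
    rw [show (5/2 : ℝ) = 2 + 1/2 by norm_num, Real.rpow_add (by norm_num), rpow_half,
      show (2:ℝ) = ((2:ℕ):ℝ) by norm_num, Real.rpow_natCast]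
    norm_num
  have e2 : Real.Gamma (5/2 : ℝ) = (3/4) * √π := by
    rw [show (5/2:ℝ) = 3/2 + 1 by norm_num, Real.Gamma_add_one (by norm_num),
      show (3/2:ℝ) = 1/2 + 1 by norm_num, Real.Gamma_add_one (by norm_num), Real.Gamma_one_half_eq]
    ring
  rw [e1, e2]; ring

lemma integral_gaussianReal01 (g : ℝ → ℝ) :
    ∫ x, g x ∂(gaussianReal 0 1) = ∫ x, gaussianPDFReal 0 1 x * g x := by
  rw [gaussianReal_of_var_ne_zero _ one_ne_zero,
    show gaussianPDF 0 1 = fun x => (((gaussianPDFReal 0 1 x).toNNReal : ℝ≥0) : ℝ≥0∞) from rfl,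
    integral_withDensity_eq_integral_smul (measurable_gaussianPDFReal 0 1).real_toNNReal]
  congr 1; funext x
  rw [NNReal.smul_def, smul_eq_mul, Real.coe_toNNReal _ (gaussianPDFReal_nonneg _ _ _)]

lemma integrable_gaussianReal01 (g : ℝ → ℝ) :
    Integrable g (gaussianReal 0 1) ↔ Integrable (fun x => gaussianPDFReal 0 1 x * g x) := by
  rw [gaussianReal_of_var_ne_zero _ one_ne_zero,
    show gaussianPDF 0 1 = fun x => (((gaussianPDFReal 0 1 x).toNNReal : ℝ≥0) : ℝ≥0∞) from rfl,
    integrable_withDensity_iff_integrable_smul (measurable_gaussianPDFReal 0 1).real_toNNReal]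
  constructor <;> intro h <;> refine h.congr (Filter.Eventually.of_forall fun x => ?_) <;>
    simp [NNReal.smul_def, Real.coe_toNNReal _ (gaussianPDFReal_nonneg _ _ _)]

lemma integrable_pow_gaussianReal (n : ℕ) :
    Integrable (fun x => x ^ n) (gaussianReal 0 1) := by
  rw [integrable_gaussianReal01]
  have : (fun x => gaussianPDFReal 0 1 x * x ^ n)
      = fun x => (√(2*π))⁻¹ * (x ^ n * rexp (-(2⁻¹:ℝ) * x ^ 2)) := by
    funext x; rw [pdf01]; ring
  rw [this]
  exact (integrable_pow_gauss n).const_mul _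

lemma gaussianReal_pow (n : ℕ) :
    ∫ x, x ^ n ∂(gaussianReal 0 1)
      = (√(2*π))⁻¹ * ∫ x, x ^ n * rexp (-(2⁻¹:ℝ) * x ^ 2) := by
  rw [integral_gaussianReal01, ← integral_const_mul]
  congr 1; funext x; rw [pdf01]; ring

lemma sqrt2pi_ne : (√(2*π))⁻¹ * (√2 * √π) = 1 := by
  rw [sqrt2pi, inv_mul_cancel₀]
  positivity

lemma gr1 : ∫ x, x ^ 1 ∂(gaussianReal 0 1) = 0 := by
  rw [gaussianReal_pow, gauss_odd 1 (by norm_num), mul_zero]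

lemma gr3 : ∫ x, x ^ 3 ∂(gaussianReal 0 1) = 0 := by
  rw [gaussianReal_pow, gauss_odd 3 (by decide), mul_zero]

lemma gr2 : ∫ x, x ^ 2 ∂(gaussianReal 0 1) = 1 := by
  rw [gaussianReal_pow, gauss2, sqrt2pi_ne]

lemma gr4 : ∫ x, x ^ 4 ∂(gaussianReal 0 1) = 3 := by
  rw [gaussianReal_pow, gauss4, ← mul_assoc, mul_comm ((√(2*π))⁻¹) 3, mul_assoc, sqrt2pi_ne, mul_one]

noncomputable def uni : Measure ℝ := (2⁻¹ : ℝ≥0∞) • volume.restrict (Icc (-1:ℝ) 1)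

lemma uni_int (n : ℕ) : Integrable (fun x:ℝ => x^n) uni :=
  by unfold uni; exact ((continuous_pow n).integrableOn_Icc (μ := volume) (a := -1) (b := 1)).integrable.smul_measure (by simp)

lemma uni_pow (n : ℕ) : ∫ x, x^n ∂uni = (1 - (-1:ℝ)^(n+1))/(2*(n+1)) := by
  rw [uni, integral_smul_measure,
    show ∫ x in Icc (-1:ℝ) 1, x^n = ∫ x in Ioc (-1:ℝ) 1, x^n from integral_Icc_eq_integral_Ioc,
    ← intervalIntegral.integral_of_le (by norm_num : (-1:ℝ) ≤ 1), integral_pow]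
  have hn : ((n:ℝ)+1) ≠ 0 := by positivity
  simp [ENNReal.toReal_inv]
  field_simp

section aux
variable {Ω : Type*} [MeasurableSpace Ω] (μ : Measure Ω)

lemma integral_expand {n : ℕ} (t : Fin n → Ω → ℝ) (ht : ∀ i, Integrable (t i) μ)
    (g : Ω → ℝ) (hg : ∀ ω, g ω = ∑ i, t i ω) :
    ∫ ω, g ω ∂μ = ∑ i, ∫ ω, t i ω ∂μ := by
  rw [funext hg]
  exact integral_finset_sum _ (fun i _ => ht i)

lemma integrable_expand {n : ℕ} (t : Fin n → Ω → ℝ) (ht : ∀ i, Integrable (t i) μ)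
    (g : Ω → ℝ) (hg : ∀ ω, g ω = ∑ i, t i ω) : Integrable g μ := by
  rw [funext hg]
  exact integrable_finset_sum _ (fun i _ => ht i)

end aux

/-- For Z, U ~ N(0,1) and ε_A ~ Uniform(-1,1) independent, with
A = Z + U + ε_A, one has E[ZA]/E[A²] = 3/7 and E[ZA³]/E[A⁴] = 35/81; since these
differ, there is no k with E[(Z - kA)·f(A)] = 0 for all polynomials f, hence
E(Z | A) is not a.s. linear in A. -/
theorem stmt15 {Ω : Type*} [MeasurableSpace Ω] (μ : Measure Ω) [IsProbabilityMeasure μ]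
    (Z U εA : Ω → ℝ) (hmZ : Measurable Z) (hmU : Measurable U) (hmε : Measurable εA)
    (hZ : Measure.map Z μ = gaussianReal 0 1)
    (hU : Measure.map U μ = gaussianReal 0 1)
    (hε : Measure.map εA μ = (2⁻¹ : ENNReal) • volume.restrict (Set.Icc (-1 : ℝ) 1))
    (hindep : iIndepFun ![Z, U, εA] μ)
    (A : Ω → ℝ) (hA : ∀ ω, A ω = Z ω + U ω + εA ω) :
    (∫ ω, Z ω * A ω ∂μ) / (∫ ω, A ω ^ 2 ∂μ) = 3 / 7 ∧
    (∫ ω, Z ω * A ω ^ 3 ∂μ) / (∫ ω, A ω ^ 4 ∂μ) = 35 / 81 ∧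
    (¬ ∃ k : ℝ, ∀ f : Polynomial ℝ,
      ∫ ω, (Z ω - k * A ω) * f.eval (A ω) ∂μ = 0) ∧
    ¬ ∃ c : ℝ, μ[Z | MeasurableSpace.comap A inferInstance]
        =ᵐ[μ] fun ω => c * A ω := by
  -- measurability of A
  have hmA : Measurable A := by
    have : A = fun ω => Z ω + U ω + εA ω := funext hA
    rw [this]; exact (hmZ.add hmU).add hmε
  -- moment transfer
  have hZmom : ∀ n : ℕ, ∫ ω, Z ω ^ n ∂μ = ∫ x, x ^ n ∂(gaussianReal 0 1) := by
    intro n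
    rw [← hZ]
    exact (integral_map hmZ.aemeasurable
      ((measurable_id.pow_const n).aestronglyMeasurable)).symm
  have hUmom : ∀ n : ℕ, ∫ ω, U ω ^ n ∂μ = ∫ x, x ^ n ∂(gaussianReal 0 1) := by
    intro n
    rw [← hU]
    exact (integral_map hmU.aemeasurable
      ((measurable_id.pow_const n).aestronglyMeasurable)).symm
  have hεu : Measure.map εA μ = uni := hε
  have hEmom : ∀ n : ℕ, ∫ ω, εA ω ^ n ∂μ = ∫ x, x ^ n ∂uni := by
    intro n
    rw [← hεu]
    exact (integral_map hmε.aemeasurable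
      ((measurable_id.pow_const n).aestronglyMeasurable)).symm
  have intZ : ∀ n : ℕ, Integrable (fun ω => Z ω ^ n) μ := by
    intro n
    have := (integrable_map_measure ((measurable_id.pow_const n).aestronglyMeasurable)
      hmZ.aemeasurable (f := Z) (g := fun x : ℝ => x ^ n)).mp
      (by rw [hZ]; exact integrable_pow_gaussianReal n)
    exact this
  have intU : ∀ n : ℕ, Integrable (fun ω => U ω ^ n) μ := by
    intro n
    have := (integrable_map_measure ((measurable_id.pow_const n).aestronglyMeasurable)
      hmU.aemeasurable (f := U) (g := fun x : ℝ => x ^ n)).mp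
      (by rw [hU]; exact integrable_pow_gaussianReal n)
    exact this
  have intE : ∀ n : ℕ, Integrable (fun ω => εA ω ^ n) μ := by
    intro n
    have := (integrable_map_measure ((measurable_id.pow_const n).aestronglyMeasurable)
      hmε.aemeasurable (f := εA) (g := fun x : ℝ => x ^ n)).mp
      (by rw [hεu]; exact uni_int n)
    exact this
  -- independence of powers
  have hpow : ∀ a b c : ℕ, iIndepFun
      ![fun ω => Z ω ^ a, fun ω => U ω ^ b, fun ω => εA ω ^ c] μ := by
    intro a b c
    have h := hindep.comp ![fun x : ℝ => x ^ a, fun x : ℝ => x ^ b, fun x : ℝ => x ^ c]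
      (by intro i; fin_cases i <;> simp <;> exact measurable_id.pow_const _)
    have he : (fun i => ![fun x : ℝ => x ^ a, fun x : ℝ => x ^ b, fun x : ℝ => x ^ c] i
        ∘ ![Z, U, εA] i) = ![fun ω => Z ω ^ a, fun ω => U ω ^ b, fun ω => εA ω ^ c] := by
      funext i; fin_cases i <;> rfl
    rwa [he] at h
  have hpowmeas : ∀ (a b c : ℕ) (i : Fin 3),
      Measurable (![fun ω => Z ω ^ a, fun ω => U ω ^ b, fun ω => εA ω ^ c] i) := by
    intro a b c i
    fin_cases i
    · exact hmZ.pow_const a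
    · exact hmU.pow_const b
    · exact hmε.pow_const c
  have key : ∀ a b c : ℕ, ∫ ω, Z ω ^ a * U ω ^ b * εA ω ^ c ∂μ
      = (∫ ω, Z ω ^ a ∂μ) * (∫ ω, U ω ^ b ∂μ) * (∫ ω, εA ω ^ c ∂μ) := by
    intro a b c
    have h01 : IndepFun (fun ω => Z ω ^ a) (fun ω => U ω ^ b) μ :=
      (hpow a b c).indepFun (i := 0) (j := 1) (by decide)
    have h012 : IndepFun (fun ω => Z ω ^ a * U ω ^ b) (fun ω => εA ω ^ c) μ := by
      have := (hpow a b c).indepFun_mul_left (hpowmeas a b c) 0 1 2 (by decide) (by decide)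
      exact this
    have e1 : ∫ ω, Z ω ^ a * U ω ^ b * εA ω ^ c ∂μ
        = (∫ ω, Z ω ^ a * U ω ^ b ∂μ) * (∫ ω, εA ω ^ c ∂μ) :=
      IndepFun.integral_mul_eq_mul_integral h012 ((hmZ.pow_const a).mul (hmU.pow_const b)).aestronglyMeasurable
        (hmε.pow_const c).aestronglyMeasurable
    have e2 : ∫ ω, Z ω ^ a * U ω ^ b ∂μ = (∫ ω, Z ω ^ a ∂μ) * (∫ ω, U ω ^ b ∂μ) :=
      IndepFun.integral_mul_eq_mul_integral h01 (hmZ.pow_const a).aestronglyMeasurable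
        (hmU.pow_const b).aestronglyMeasurable
    rw [e1, e2]
  -- integrability of monomials
  have intM : ∀ a b c : ℕ, Integrable (fun ω => Z ω ^ a * U ω ^ b * εA ω ^ c) μ := by
    intro a b c
    have h01 : IndepFun (fun ω => Z ω ^ a) (fun ω => U ω ^ b) μ :=
      (hpow a b c).indepFun (i := 0) (j := 1) (by decide)
    have h012 : IndepFun (fun ω => Z ω ^ a * U ω ^ b) (fun ω => εA ω ^ c) μ := by
      have := (hpow a b c).indepFun_mul_left (hpowmeas a b c) 0 1 2 (by decide) (by decide)
      exact this
    exact h012.integrable_mul (h01.integrable_mul (intZ a) (intU b)) (intE c)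
  -- moment values
  have hZm0 : ∫ ω, Z ω ^ 0 ∂μ = 1 := by simp
  have hZm1 : ∫ ω, Z ω ^ 1 ∂μ = 0 := by rw [hZmom 1, gr1]
  have hZm2 : ∫ ω, Z ω ^ 2 ∂μ = 1 := by rw [hZmom 2, gr2]
  have hZm3 : ∫ ω, Z ω ^ 3 ∂μ = 0 := by rw [hZmom 3, gr3]
  have hZm4 : ∫ ω, Z ω ^ 4 ∂μ = 3 := by rw [hZmom 4, gr4]
  have hUm0 : ∫ ω, U ω ^ 0 ∂μ = 1 := by simp
  have hUm1 : ∫ ω, U ω ^ 1 ∂μ = 0 := by rw [hUmom 1, gr1]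
  have hUm2 : ∫ ω, U ω ^ 2 ∂μ = 1 := by rw [hUmom 2, gr2]
  have hUm3 : ∫ ω, U ω ^ 3 ∂μ = 0 := by rw [hUmom 3, gr3]
  have hUm4 : ∫ ω, U ω ^ 4 ∂μ = 3 := by rw [hUmom 4, gr4]
  have hEm0 : ∫ ω, εA ω ^ 0 ∂μ = 1 := by simp
  have hEm1 : ∫ ω, εA ω ^ 1 ∂μ = 0 := by rw [hEmom 1, uni_pow]; norm_num
  have hEm2 : ∫ ω, εA ω ^ 2 ∂μ = 1/3 := by rw [hEmom 2, uni_pow]; norm_num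
  have hEm3 : ∫ ω, εA ω ^ 3 ∂μ = 0 := by rw [hEmom 3, uni_pow]; norm_num
  have hEm4 : ∫ ω, εA ω ^ 4 ∂μ = 1/5 := by rw [hEmom 4, uni_pow]; norm_num
  have hterm : ∀ (r : ℝ) (a b c : ℕ), ∫ ω, r * (Z ω ^ a * U ω ^ b * εA ω ^ c) ∂μ
      = r * ((∫ ω, Z ω ^ a ∂μ) * (∫ ω, U ω ^ b ∂μ) * (∫ ω, εA ω ^ c ∂μ)) := by
    intro r a b c
    rw [integral_const_mul, key]
  have hZA : ∫ ω, Z ω * A ω ∂μ = 1 := by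
    rw [integral_expand μ ![fun ω => (1:ℝ) * (Z ω ^ 2 * U ω ^ 0 * εA ω ^ 0),
      fun ω => (1:ℝ) * (Z ω ^ 1 * U ω ^ 1 * εA ω ^ 0),
      fun ω => (1:ℝ) * (Z ω ^ 1 * U ω ^ 0 * εA ω ^ 1)]
      (by intro i; fin_cases i <;> exact (intM _ _ _).const_mul _)
      _ (fun ω => by
        simp only [Fin.sum_univ_succ, Fin.sum_univ_zero, Matrix.cons_val_zero, Matrix.cons_val_one, Matrix.head_cons, Matrix.cons_val_succ, add_zero, hA]
        ring)]
    simp only [Fin.sum_univ_succ, Fin.sum_univ_zero, Matrix.cons_val_zero, Matrix.cons_val_one, Matrix.head_cons, Matrix.cons_val_succ, add_zero]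
    simp only [hterm]
    simp only [hZm0, hZm1, hZm2, hZm3, hZm4, hUm0, hUm1, hUm2, hUm3, hUm4,
      hEm0, hEm1, hEm2, hEm3, hEm4]
    norm_num
  have hA2 : ∫ ω, A ω ^ 2 ∂μ = 7/3 := by
    rw [integral_expand μ ![fun ω => (1:ℝ) * (Z ω ^ 2 * U ω ^ 0 * εA ω ^ 0),
      fun ω => (1:ℝ) * (Z ω ^ 0 * U ω ^ 2 * εA ω ^ 0),
      fun ω => (1:ℝ) * (Z ω ^ 0 * U ω ^ 0 * εA ω ^ 2),
      fun ω => (2:ℝ) * (Z ω ^ 1 * U ω ^ 1 * εA ω ^ 0),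
      fun ω => (2:ℝ) * (Z ω ^ 1 * U ω ^ 0 * εA ω ^ 1),
      fun ω => (2:ℝ) * (Z ω ^ 0 * U ω ^ 1 * εA ω ^ 1)]
      (by intro i; fin_cases i <;> exact (intM _ _ _).const_mul _)
      _ (fun ω => by
        simp only [Fin.sum_univ_succ, Fin.sum_univ_zero, Matrix.cons_val_zero, Matrix.cons_val_one, Matrix.head_cons, Matrix.cons_val_succ, add_zero, hA]
        ring)]
    simp only [Fin.sum_univ_succ, Fin.sum_univ_zero, Matrix.cons_val_zero, Matrix.cons_val_one, Matrix.head_cons, Matrix.cons_val_succ, add_zero]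
    simp only [hterm]
    simp only [hZm0, hZm1, hZm2, hZm3, hZm4, hUm0, hUm1, hUm2, hUm3, hUm4,
      hEm0, hEm1, hEm2, hEm3, hEm4]
    norm_num
  have hZA3 : ∫ ω, Z ω * A ω ^ 3 ∂μ = 7 := by
    rw [integral_expand μ ![fun ω => (1:ℝ) * (Z ω ^ 4 * U ω ^ 0 * εA ω ^ 0),
      fun ω => (1:ℝ) * (Z ω ^ 1 * U ω ^ 3 * εA ω ^ 0),
      fun ω => (1:ℝ) * (Z ω ^ 1 * U ω ^ 0 * εA ω ^ 3),
      fun ω => (3:ℝ) * (Z ω ^ 3 * U ω ^ 1 * εA ω ^ 0),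
      fun ω => (3:ℝ) * (Z ω ^ 3 * U ω ^ 0 * εA ω ^ 1),
      fun ω => (3:ℝ) * (Z ω ^ 2 * U ω ^ 2 * εA ω ^ 0),
      fun ω => (3:ℝ) * (Z ω ^ 1 * U ω ^ 2 * εA ω ^ 1),
      fun ω => (3:ℝ) * (Z ω ^ 2 * U ω ^ 0 * εA ω ^ 2),
      fun ω => (3:ℝ) * (Z ω ^ 1 * U ω ^ 1 * εA ω ^ 2),
      fun ω => (6:ℝ) * (Z ω ^ 2 * U ω ^ 1 * εA ω ^ 1)]
      (by intro i; fin_cases i <;> exact (intM _ _ _).const_mul _)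
      _ (fun ω => by
        simp only [Fin.sum_univ_succ, Fin.sum_univ_zero, Matrix.cons_val_zero, Matrix.cons_val_one, Matrix.head_cons, Matrix.cons_val_succ, add_zero, hA]
        ring)]
    simp only [Fin.sum_univ_succ, Fin.sum_univ_zero, Matrix.cons_val_zero, Matrix.cons_val_one, Matrix.head_cons, Matrix.cons_val_succ, add_zero]
    simp only [hterm]
    simp only [hZm0, hZm1, hZm2, hZm3, hZm4, hUm0, hUm1, hUm2, hUm3, hUm4,
      hEm0, hEm1, hEm2, hEm3, hEm4]
    norm_num
  have hA4 : ∫ ω, A ω ^ 4 ∂μ = 81/5 := by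
    rw [integral_expand μ ![fun ω => (1:ℝ) * (Z ω ^ 4 * U ω ^ 0 * εA ω ^ 0),
      fun ω => (1:ℝ) * (Z ω ^ 0 * U ω ^ 4 * εA ω ^ 0),
      fun ω => (1:ℝ) * (Z ω ^ 0 * U ω ^ 0 * εA ω ^ 4),
      fun ω => (4:ℝ) * (Z ω ^ 3 * U ω ^ 1 * εA ω ^ 0),
      fun ω => (4:ℝ) * (Z ω ^ 3 * U ω ^ 0 * εA ω ^ 1),
      fun ω => (4:ℝ) * (Z ω ^ 1 * U ω ^ 3 * εA ω ^ 0),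
      fun ω => (4:ℝ) * (Z ω ^ 0 * U ω ^ 3 * εA ω ^ 1),
      fun ω => (4:ℝ) * (Z ω ^ 1 * U ω ^ 0 * εA ω ^ 3),
      fun ω => (4:ℝ) * (Z ω ^ 0 * U ω ^ 1 * εA ω ^ 3),
      fun ω => (6:ℝ) * (Z ω ^ 2 * U ω ^ 2 * εA ω ^ 0),
      fun ω => (6:ℝ) * (Z ω ^ 2 * U ω ^ 0 * εA ω ^ 2),
      fun ω => (6:ℝ) * (Z ω ^ 0 * U ω ^ 2 * εA ω ^ 2),
      fun ω => (12:ℝ) * (Z ω ^ 2 * U ω ^ 1 * εA ω ^ 1),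
      fun ω => (12:ℝ) * (Z ω ^ 1 * U ω ^ 2 * εA ω ^ 1),
      fun ω => (12:ℝ) * (Z ω ^ 1 * U ω ^ 1 * εA ω ^ 2)]
      (by intro i; fin_cases i <;> exact (intM _ _ _).const_mul _)
      _ (fun ω => by
        simp only [Fin.sum_univ_succ, Fin.sum_univ_zero, Matrix.cons_val_zero, Matrix.cons_val_one, Matrix.head_cons, Matrix.cons_val_succ, add_zero, hA]
        ring)]
    simp only [Fin.sum_univ_succ, Fin.sum_univ_zero, Matrix.cons_val_zero, Matrix.cons_val_one, Matrix.head_cons, Matrix.cons_val_succ, add_zero]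
    simp only [hterm]
    simp only [hZm0, hZm1, hZm2, hZm3, hZm4, hUm0, hUm1, hUm2, hUm3, hUm4,
      hEm0, hEm1, hEm2, hEm3, hEm4]
    norm_num
  have intZA : Integrable (fun ω => Z ω * A ω) μ := by
    refine integrable_expand μ ![fun ω => (1:ℝ) * (Z ω ^ 2 * U ω ^ 0 * εA ω ^ 0),
      fun ω => (1:ℝ) * (Z ω ^ 1 * U ω ^ 1 * εA ω ^ 0),
      fun ω => (1:ℝ) * (Z ω ^ 1 * U ω ^ 0 * εA ω ^ 1)]
      (by intro i; fin_cases i <;> exact (intM _ _ _).const_mul _)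
      _ (fun ω => by
        simp only [Fin.sum_univ_succ, Fin.sum_univ_zero, Matrix.cons_val_zero, Matrix.cons_val_one, Matrix.head_cons, Matrix.cons_val_succ, add_zero, hA]
        ring)
  have intA2i : Integrable (fun ω => A ω ^ 2) μ := by
    refine integrable_expand μ ![fun ω => (1:ℝ) * (Z ω ^ 2 * U ω ^ 0 * εA ω ^ 0),
      fun ω => (1:ℝ) * (Z ω ^ 0 * U ω ^ 2 * εA ω ^ 0),
      fun ω => (1:ℝ) * (Z ω ^ 0 * U ω ^ 0 * εA ω ^ 2),
      fun ω => (2:ℝ) * (Z ω ^ 1 * U ω ^ 1 * εA ω ^ 0),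
      fun ω => (2:ℝ) * (Z ω ^ 1 * U ω ^ 0 * εA ω ^ 1),
      fun ω => (2:ℝ) * (Z ω ^ 0 * U ω ^ 1 * εA ω ^ 1)]
      (by intro i; fin_cases i <;> exact (intM _ _ _).const_mul _)
      _ (fun ω => by
        simp only [Fin.sum_univ_succ, Fin.sum_univ_zero, Matrix.cons_val_zero, Matrix.cons_val_one, Matrix.head_cons, Matrix.cons_val_succ, add_zero, hA]
        ring)
  have intZA3 : Integrable (fun ω => Z ω * A ω ^ 3) μ := by
    refine integrable_expand μ ![fun ω => (1:ℝ) * (Z ω ^ 4 * U ω ^ 0 * εA ω ^ 0),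
      fun ω => (1:ℝ) * (Z ω ^ 1 * U ω ^ 3 * εA ω ^ 0),
      fun ω => (1:ℝ) * (Z ω ^ 1 * U ω ^ 0 * εA ω ^ 3),
      fun ω => (3:ℝ) * (Z ω ^ 3 * U ω ^ 1 * εA ω ^ 0),
      fun ω => (3:ℝ) * (Z ω ^ 3 * U ω ^ 0 * εA ω ^ 1),
      fun ω => (3:ℝ) * (Z ω ^ 2 * U ω ^ 2 * εA ω ^ 0),
      fun ω => (3:ℝ) * (Z ω ^ 1 * U ω ^ 2 * εA ω ^ 1),
      fun ω => (3:ℝ) * (Z ω ^ 2 * U ω ^ 0 * εA ω ^ 2),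
      fun ω => (3:ℝ) * (Z ω ^ 1 * U ω ^ 1 * εA ω ^ 2),
      fun ω => (6:ℝ) * (Z ω ^ 2 * U ω ^ 1 * εA ω ^ 1)]
      (by intro i; fin_cases i <;> exact (intM _ _ _).const_mul _)
      _ (fun ω => by
        simp only [Fin.sum_univ_succ, Fin.sum_univ_zero, Matrix.cons_val_zero, Matrix.cons_val_one, Matrix.head_cons, Matrix.cons_val_succ, add_zero, hA]
        ring)
  have intA4i : Integrable (fun ω => A ω ^ 4) μ := by
    refine integrable_expand μ ![fun ω => (1:ℝ) * (Z ω ^ 4 * U ω ^ 0 * εA ω ^ 0),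
      fun ω => (1:ℝ) * (Z ω ^ 0 * U ω ^ 4 * εA ω ^ 0),
      fun ω => (1:ℝ) * (Z ω ^ 0 * U ω ^ 0 * εA ω ^ 4),
      fun ω => (4:ℝ) * (Z ω ^ 3 * U ω ^ 1 * εA ω ^ 0),
      fun ω => (4:ℝ) * (Z ω ^ 3 * U ω ^ 0 * εA ω ^ 1),
      fun ω => (4:ℝ) * (Z ω ^ 1 * U ω ^ 3 * εA ω ^ 0),
      fun ω => (4:ℝ) * (Z ω ^ 0 * U ω ^ 3 * εA ω ^ 1),
      fun ω => (4:ℝ) * (Z ω ^ 1 * U ω ^ 0 * εA ω ^ 3),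
      fun ω => (4:ℝ) * (Z ω ^ 0 * U ω ^ 1 * εA ω ^ 3),
      fun ω => (6:ℝ) * (Z ω ^ 2 * U ω ^ 2 * εA ω ^ 0),
      fun ω => (6:ℝ) * (Z ω ^ 2 * U ω ^ 0 * εA ω ^ 2),
      fun ω => (6:ℝ) * (Z ω ^ 0 * U ω ^ 2 * εA ω ^ 2),
      fun ω => (12:ℝ) * (Z ω ^ 2 * U ω ^ 1 * εA ω ^ 1),
      fun ω => (12:ℝ) * (Z ω ^ 1 * U ω ^ 2 * εA ω ^ 1),
      fun ω => (12:ℝ) * (Z ω ^ 1 * U ω ^ 1 * εA ω ^ 2)]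
      (by intro i; fin_cases i <;> exact (intM _ _ _).const_mul _)
      _ (fun ω => by
        simp only [Fin.sum_univ_succ, Fin.sum_univ_zero, Matrix.cons_val_zero, Matrix.cons_val_one, Matrix.head_cons, Matrix.cons_val_succ, add_zero, hA]
        ring)
  refine ⟨by rw [hZA, hA2]; norm_num, by rw [hZA3, hA4]; norm_num, ?_, ?_⟩
  · rintro ⟨k, hk⟩
    have e1 := hk Polynomial.X
    have e2 := hk (Polynomial.X ^ 3)
    simp only [Polynomial.eval_X, Polynomial.eval_pow] at e1 e2
    have s1 : ∫ ω, (Z ω - k * A ω) * A ω ∂μ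
        = (∫ ω, Z ω * A ω ∂μ) - k * ∫ ω, A ω ^ 2 ∂μ := by
      simp only [show ∀ ω, (Z ω - k * A ω) * A ω = Z ω * A ω - k * (A ω ^ 2)
        from fun ω => by ring]
      rw [integral_sub intZA (intA2i.const_mul k), integral_const_mul]
    have s2 : ∫ ω, (Z ω - k * A ω) * A ω ^ 3 ∂μ
        = (∫ ω, Z ω * A ω ^ 3 ∂μ) - k * ∫ ω, A ω ^ 4 ∂μ := by
      simp only [show ∀ ω, (Z ω - k * A ω) * A ω ^ 3 = Z ω * A ω ^ 3 - k * (A ω ^ 4)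
        from fun ω => by ring]
      rw [integral_sub intZA3 (intA4i.const_mul k), integral_const_mul]
    rw [s1, hZA, hA2] at e1
    rw [s2, hZA3, hA4] at e2
    linarith
  · rintro ⟨c, hc⟩
    have hm : MeasurableSpace.comap A inferInstance ≤ _ := hmA.comap_le
    have hAsm : StronglyMeasurable[MeasurableSpace.comap A inferInstance] A :=
      (Measurable.of_comap_le le_rfl).stronglyMeasurable
    have intZ1 : Integrable Z μ :=
      (intZ 1).congr (Filter.Eventually.of_forall fun ω => pow_one _)
    have pull : ∀ g : Ω → ℝ, StronglyMeasurable[MeasurableSpace.comap A inferInstance] g →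
        Integrable (fun ω => g ω * Z ω) μ →
        ∫ ω, g ω * Z ω ∂μ = ∫ ω, g ω * (c * A ω) ∂μ := by
      intro g hgm hint
      have h1 : μ[g * Z | MeasurableSpace.comap A inferInstance]
          =ᵐ[μ] g * μ[Z | MeasurableSpace.comap A inferInstance] :=
        condExp_mul_of_stronglyMeasurable_left hgm hint intZ1
      calc ∫ ω, g ω * Z ω ∂μ
          = ∫ ω, (μ[g * Z | MeasurableSpace.comap A inferInstance]) ω ∂μ :=
            (integral_condExp hm).symm
        _ = ∫ ω, (g * μ[Z | MeasurableSpace.comap A inferInstance]) ω ∂μ :=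
            integral_congr_ae h1
        _ = ∫ ω, g ω * (c * A ω) ∂μ := by
            refine integral_congr_ae (hc.mono fun ω hω => ?_)
            simp only [Pi.mul_apply, hω]
    have q1 := pull A hAsm (intZA.congr (Filter.Eventually.of_forall fun ω => mul_comm _ _))
    have q2 := pull (fun ω => A ω ^ 3) (hAsm.pow 3)
      (intZA3.congr (Filter.Eventually.of_forall fun ω => mul_comm _ _))
    rw [show (fun ω => A ω * Z ω) = fun ω => Z ω * A ω from funext fun ω => mul_comm _ _] at q1
    have r1 : ∫ ω, A ω * (c * A ω) ∂μ = c * ∫ ω, A ω ^ 2 ∂μ := by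
      simp only [show ∀ ω, A ω * (c * A ω) = c * (A ω ^ 2) from fun ω => by ring]
      rw [integral_const_mul]
    have r2 : ∫ ω, A ω ^ 3 * (c * A ω) ∂μ = c * ∫ ω, A ω ^ 4 ∂μ := by
      simp only [show ∀ ω, A ω ^ 3 * (c * A ω) = c * (A ω ^ 4) from fun ω => by ring]
      rw [integral_const_mul]
    simp only [show ∀ ω, A ω ^ 3 * Z ω = Z ω * A ω ^ 3 from fun ω => mul_comm _ _] at q2
    have v1 := q1.trans r1
    have v2 := q2.trans r2
    rw [hZA, hA2] at v1
    rw [hZA3, hA4] at v2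
    linarith
end
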